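/- Let G=(V,E) be a finite multigraph in which every edge has multiplicity at most two. Then the edge multiset E can be partitioned into two simple (multiplicity-free) edge sets E₁ and E₂ such that: (P1) |E₁| = ⌈|E|/2⌉ and |E₂| = ⌊|E|/2⌋; (P2) for each i ∈ {1,2} and every vertex v, the degree d_i(v) of v in E_i satisfies d_G(v)/2 − 1 ≤ d_i(v) ≤ d_G(v)/2 + 1, where d_G(v) counts edges of v in E with multiplicity; and (P3) if G is bipartite, then moreover ⌊d_G(v)/2⌋ ≤ d_i(v) ≤ ⌈d_G(v)/2⌉ for each i ∈ {1,2} and every vertex v. -/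

import Mathlib

open Finset

variable {V : Type*} [DecidableEq V]

/-- Degree of `v` in a multiset of edges, counted with multiplicity. -/
def mdeg (E : Multiset (Sym2 V)) (v : V) : ℕ :=
  Multiset.card (E.filter (fun e => v ∈ e))

/-- Degree of `v` in a (simple) finite set of edges. -/
def fdeg (F : Finset (Sym2 V)) (v : V) : ℕ :=
  (F.filter (fun e => v ∈ e)).card

/-- The multigraph with edge multiset `E` is bipartite (its underlying simple graph is
two-colorable). -/
def MultigraphBipartite (E : Multiset (Sym2 V)) : Prop :=
  ∃ c : V → Bool, ∀ e ∈ E, ∀ a b : V, e = s(a, b) → c a ≠ c b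

set_option linter.unusedSectionVars false
set_option linter.unusedVariables false
set_option linter.unusedTactic false

namespace Stmt4Aux
def wEdges : V → List V → List (Sym2 V)
  | _, [] => []
  | x, y :: t => s(x, y) :: wEdges y t
def wLast (x : V) : List V → V
  | [] => x
  | y :: t => wLast y t
def altE : Bool → V → List V → Finset (Sym2 V)
  | _, _, [] => ∅
  | true, x, y :: t => insert s(x, y) (altE false y t)
  | false, _, y :: t => altE true y t

lemma fdeg_empty (v : V) : fdeg (∅ : Finset (Sym2 V)) v = 0 := rfl

lemma fdeg_insert {e : Sym2 V} {F : Finset (Sym2 V)} (h : e ∉ F) (v : V) :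
    fdeg (insert e F) v = (if v ∈ e then 1 else 0) + fdeg F v := by
  unfold fdeg
  rw [Finset.filter_insert]
  split
  · rw [Finset.card_insert_of_notMem (by simp [h]), add_comm]
  · simp

lemma fdeg_mono {F G : Finset (Sym2 V)} (h : F ⊆ G) (v : V) : fdeg F v ≤ fdeg G v :=
  Finset.card_le_card (Finset.filter_subset_filter _ h)

lemma fdeg_eq_zero {F : Finset (Sym2 V)} {v : V} (h : ∀ e ∈ F, v ∉ e) : fdeg F v = 0 := by
  unfold fdeg
  rw [Finset.card_eq_zero, Finset.filter_eq_empty_iff]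
  exact h

lemma altE_subset' (b : Bool) (x : V) (p : List V) {e : Sym2 V} (he : e ∈ altE b x p) :
    e ∈ wEdges x p := by
  induction p generalizing x b with
  | nil => cases b <;> simp [altE] at he
  | cons y t ih =>
    cases b with
    | true =>
      simp only [altE, Finset.mem_insert] at he
      rcases he with h | h
      · simp [wEdges, h]
      · exact List.mem_cons_of_mem _ (ih false y h)
    | false => exact List.mem_cons_of_mem _ (ih true y he)

lemma fdeg_altE (x : V) (p : List V) (h : (wEdges x p).Nodup)
    (hnd : ∀ e ∈ wEdges x p, ¬ e.IsDiag) (v : V) :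
    (fdeg (altE true x p) v : ℤ) - (fdeg (altE false x p) v : ℤ)
      = (if v = x then 1 else 0) - (if v = wLast x p then (-1) ^ p.length else 0) := by
  induction p generalizing x with
  | nil => simp [altE, wLast, fdeg_empty]
  | cons y t ih =>
    simp only [wEdges, List.nodup_cons] at h
    have hxy : x ≠ y := by
      have := hnd s(x, y) (by simp [wEdges])
      simpa [Sym2.mk_isDiag_iff] using this
    have hmem : (if v ∈ s(x, y) then (1:ℤ) else 0)
        = (if v = x then 1 else 0) + (if v = y then 1 else 0) := by
      by_cases hx : v = x <;> by_cases hy : v = y <;>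
        simp_all [Sym2.mem_iff]
    have ihy := ih y h.2 (fun e he => hnd e (List.mem_cons_of_mem _ he))
    simp only [altE, fdeg_insert (fun hc => h.1 (altE_subset' _ _ _ hc)) v]
    push_cast
    rw [hmem]
    simp only [wLast, List.length_cons]
    have hl : ((-1 : ℤ)) ^ (t.length + 1) = -((-1) ^ t.length) := by ring
    rw [hl]
    show _ = (if v = x then 1 else 0) - (if v = wLast y t then -((-1:ℤ) ^ t.length) else 0)
    rw [show (if v = wLast y t then -((-1:ℤ) ^ t.length) else 0)
        = -(if v = wLast y t then ((-1:ℤ) ^ t.length) else 0) by split <;> simp]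
    linarith [ihy]

lemma color_parity (c : V → Bool) (x : V) (p : List V)
    (hc : ∀ e ∈ wEdges x p, ∀ a b : V, e = s(a, b) → c a ≠ c b) :
    (c (wLast x p) = c x) ↔ Even p.length := by
  induction p generalizing x with
  | nil => simp [wLast]
  | cons y t ih =>
    have hxy : c x ≠ c y := hc s(x, y) (by simp [wEdges]) x y rfl
    have iht := ih y (fun e he a b hab => hc e (List.mem_cons_of_mem _ he) a b hab)
    simp only [wLast, List.length_cons, Nat.even_add_one]
    constructor
    · intro hl
      intro hev
      have := iht.mpr hev
      rw [this] at hl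
      exact hxy hl.symm
    · intro hno
      have : ¬ (c (wLast y t) = c y) := fun hh => hno (iht.mp hh)
      cases hcy : c y <;> cases hcx : c x <;> cases hcl : c (wLast y t) <;>
        simp_all


def IsTrail (S : Finset (Sym2 V)) (x : V) (p : List V) : Prop :=
  (wEdges x p).Nodup ∧ ∀ e ∈ wEdges x p, e ∈ S

lemma wEdges_length' (x : V) (p : List V) : (wEdges x p).length = p.length := by
  induction p generalizing x with
  | nil => rfl
  | cons y t ih => simp [wEdges, ih]

lemma wEdges_append' (x w : V) (p : List V) :
    wEdges x (p ++ [w]) = wEdges x p ++ [s(wLast x p, w)] := by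
  induction p generalizing x with
  | nil => rfl
  | cons y t ih => simp [wEdges, wLast, ih]

lemma trail_length_le {S : Finset (Sym2 V)} {x : V} {p : List V} (h : IsTrail S x p) :
    p.length ≤ S.card := by
  have h1 : (wEdges x p).toFinset ⊆ S := fun e he => h.2 e (List.mem_toFinset.mp he)
  have h2 : (wEdges x p).toFinset.card = p.length := by
    rw [List.toFinset_card_of_nodup h.1, wEdges_length']
  rw [← h2]
  exact Finset.card_le_card h1

/-- There is a trail of maximum length, and both its endpoints are saturated. -/
lemma exists_max_trail {S : Finset (Sym2 V)} (hS : S.Nonempty)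
    (hdiag : ∀ e ∈ S, ¬ e.IsDiag) :
    ∃ (x : V) (p : List V), IsTrail S x p ∧ 1 ≤ p.length ∧
      (∀ e ∈ S, e ∉ wEdges x p → x ∉ e ∧ wLast x p ∉ e) := by
  classical
  set T : Set ℕ := {n | ∃ (x : V) (p : List V), IsTrail S x p ∧ p.length = n} with hT
  obtain ⟨e, he⟩ := hS
  obtain ⟨a, b⟩ := e
  have hone : (1 : ℕ) ∈ T := by
    refine ⟨a, [b], ⟨by simp [wEdges], ?_⟩, rfl⟩
    intro f hf
    simp only [wEdges] at hf
    simp only [List.mem_singleton] at hf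
    rwa [hf]
  have hbdd : BddAbove T := by
    refine ⟨S.card, fun n hn => ?_⟩
    obtain ⟨x, p, htr, hl⟩ := hn
    rw [← hl]
    exact trail_length_le htr
  have hmem := Nat.sSup_mem ⟨1, hone⟩ hbdd
  obtain ⟨x, p, htr, hl⟩ := hmem
  refine ⟨x, p, htr, ?_, ?_⟩
  · rw [hl]; exact le_csSup hbdd hone
  · intro f hf hfnot
    constructor
    · intro hxf
      obtain ⟨w, hw⟩ : ∃ w, f = s(x, w) := ⟨Sym2.Mem.other hxf, (Sym2.other_spec hxf).symm⟩
      have htr' : IsTrail S w (x :: p) := by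
        constructor
        · simp only [wEdges, List.nodup_cons]
          refine ⟨?_, htr.1⟩
          rw [Sym2.eq_swap, ← hw]
          exact hfnot
        · intro g hg
          simp only [wEdges, List.mem_cons] at hg
          rcases hg with hg | hg
          · rw [hg, Sym2.eq_swap, ← hw]; exact hf
          · exact htr.2 g hg
      have : p.length + 1 ∈ T := ⟨w, x :: p, htr', by simp⟩
      have := le_csSup hbdd this
      omega
    · intro hzf
      obtain ⟨w, hw⟩ : ∃ w, f = s(wLast x p, w) :=
        ⟨Sym2.Mem.other hzf, (Sym2.other_spec hzf).symm⟩
      have htr' : IsTrail S x (p ++ [w]) := by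
        constructor
        · rw [wEdges_append']
          rw [List.nodup_append]
          refine ⟨htr.1, List.nodup_singleton _, ?_⟩
          intro g hg g' hg2 hgg
          simp only [List.mem_singleton] at hg2
          subst hg2
          subst hgg
          rw [← hw] at hg
          exact hfnot hg
        · intro g hg
          rw [wEdges_append'] at hg
          rcases List.mem_append.mp hg with hg | hg
          · exact htr.2 g hg
          · simp only [List.mem_singleton] at hg
            rw [hg, ← hw]; exact hf
      have : p.length + 1 ∈ T := ⟨x, p ++ [w], htr', by simp⟩
      have := le_csSup hbdd this
      omega

lemma altE_union (x : V) (p : List V) :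
    altE true x p ∪ altE false x p = (wEdges x p).toFinset := by
  induction p generalizing x with
  | nil => simp [altE, wEdges]
  | cons y t ih =>
    simp only [altE, wEdges, List.toFinset_cons, ← ih y]
    rw [Finset.insert_union]
    congr 1
    exact Finset.union_comm _ _

lemma altE_disjoint (x : V) (p : List V) (h : (wEdges x p).Nodup) :
    Disjoint (altE true x p) (altE false x p) := by
  induction p generalizing x with
  | nil => simp [altE]
  | cons y t ih =>
    simp only [wEdges, List.nodup_cons] at h
    simp only [altE]
    rw [Finset.insert_eq, Finset.disjoint_union_left]
    constructor
    · simp only [Finset.disjoint_singleton_left]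
      exact fun hc => h.1 (altE_subset' _ _ _ hc)
    · exact (ih y h.2).symm

lemma altE_card (x : V) (p : List V) (h : (wEdges x p).Nodup) :
    (altE true x p).card = (p.length + 1) / 2 ∧ (altE false x p).card = p.length / 2 := by
  induction p generalizing x with
  | nil => simp [altE]
  | cons y t ih =>
    simp only [wEdges, List.nodup_cons] at h
    obtain ⟨ih1, ih2⟩ := ih y h.2
    constructor
    · simp only [altE]
      rw [Finset.card_insert_of_notMem (fun hc => h.1 (altE_subset' _ _ _ hc)), ih2]
      simp only [List.length_cons]
      omega
    · simp only [altE, ih1, List.length_cons]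


lemma fdeg_union {F G : Finset (Sym2 V)} (h : Disjoint F G) (v : V) :
    fdeg (F ∪ G) v = fdeg F v + fdeg G v := by
  unfold fdeg
  rw [Finset.filter_union, Finset.card_union_of_disjoint
    (Finset.disjoint_filter_filter h)]

lemma val_union {F G : Finset (Sym2 V)} (h : Disjoint F G) :
    (F ∪ G).val = F.val + G.val := by
  rw [← Finset.disjUnion_eq_union F G h]
  rfl

lemma core : ∀ (N : ℕ) (S : Finset (Sym2 V)), S.card ≤ N → (∀ e ∈ S, ¬ e.IsDiag) →
    ∃ A B : Finset (Sym2 V), A.val + B.val = S.val ∧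
      A.card = (S.card + 1) / 2 ∧ B.card = S.card / 2 ∧
      (∀ v, |(fdeg A v : ℤ) - (fdeg B v : ℤ)| ≤ 2) ∧
      ((∃ c : V → Bool, ∀ e ∈ S, ∀ a b : V, e = s(a, b) → c a ≠ c b) →
        ∀ v, |(fdeg A v : ℤ) - (fdeg B v : ℤ)| ≤ 1) := by
  intro N
  induction N with
  | zero =>
    intro S hcard _
    have hS : S = ∅ := Finset.card_eq_zero.mp (le_antisymm hcard (Nat.zero_le _))
    subst hS
    exact ⟨∅, ∅, by simp, by simp, by simp, fun v => by simp [fdeg_empty],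
      fun _ v => by simp [fdeg_empty]⟩
  | succ N ih =>
    intro S hcard hdiag
    rcases S.eq_empty_or_nonempty with rfl | hne
    · exact ⟨∅, ∅, by simp, by simp, by simp, fun v => by simp [fdeg_empty],
        fun _ v => by simp [fdeg_empty]⟩
    obtain ⟨x, p, htr, hlen, hmax⟩ := exists_max_trail hne hdiag
    set n := p.length with hn
    set L := wEdges x p with hL
    set T := L.toFinset with hT
    set z := wLast x p with hz
    have hTS : T ⊆ S := fun e he => htr.2 e (List.mem_toFinset.mp he)
    have hTcard : T.card = n := by
      show (wEdges x p).toFinset.card = p.length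
      rw [List.toFinset_card_of_nodup htr.1, wEdges_length']
    have hnS : n ≤ S.card := by rw [← hTcard]; exact Finset.card_le_card hTS
    set R := S \ T with hR
    have hRcard : R.card = S.card - n := by rw [hR, Finset.card_sdiff_of_subset hTS, hTcard]
    have hRle : R.card ≤ N := by omega
    have hRS : R ⊆ S := Finset.sdiff_subset
    have hRdiag : ∀ e ∈ R, ¬ e.IsDiag := fun e he => hdiag e (hRS he)
    obtain ⟨A', B', hsum', hcardA', hcardB', hdeg', hbip'⟩ := ih R hRle hRdiag
    have hScard : S.card = R.card + n := by omega
    -- endpoints have no edges in R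
    have hend : ∀ v : V, (v = x ∨ v = z) → fdeg R v = 0 := by
      intro v hv
      apply fdeg_eq_zero
      intro e he hve
      obtain ⟨heS, heT⟩ := Finset.mem_sdiff.mp he
      have heL : e ∉ L := fun hc => heT (List.mem_toFinset.mpr hc)
      obtain ⟨h1, h2⟩ := hmax e heS heL
      rcases hv with rfl | rfl
      · exact h1 hve
      · exact h2 hve
    have hA'R : A' ⊆ R := by
      intro e he
      have hle : A'.val ≤ R.val := hsum' ▸ Multiset.le_add_right _ _
      exact Multiset.mem_of_le hle he
    have hB'R : B' ⊆ R := by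
      intro e he
      have hle : B'.val ≤ R.val := hsum' ▸ Multiset.le_add_left _ _
      exact Multiset.mem_of_le hle he
    have hndL : ∀ e ∈ L, ¬ e.IsDiag := fun e he => hdiag e (htr.2 e he)
    set At := altE true x p with hAt
    set Bt := altE false x p with hBt
    obtain ⟨hcAt, hcBt⟩ := altE_card x p htr.1
    have hAtBt : Disjoint At Bt := altE_disjoint x p htr.1
    have hUnion : At ∪ Bt = T := altE_union x p
    have hdiffT : ∀ v : V, (fdeg At v : ℤ) - (fdeg Bt v : ℤ)
        = (if v = x then 1 else 0) - (if v = z then (-1) ^ n else 0) :=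
      fdeg_altE x p htr.1 hndL
    have hAtT : At ⊆ T := hUnion ▸ Finset.subset_union_left
    have hBtT : Bt ⊆ T := hUnion ▸ Finset.subset_union_right
    have hRT : Disjoint R T := Finset.sdiff_disjoint
    have hTval : T.val = At.val + Bt.val := by rw [← hUnion, val_union hAtBt]
    have hSval : S.val = R.val + T.val := by
      have h1 : T.val ≤ S.val := Finset.val_le_iff.mpr hTS
      rw [hR, Finset.sdiff_val, tsub_add_cancel_of_le h1]
    have hpow : ((-1 : ℤ)) ^ n = 1 ∨ ((-1 : ℤ)) ^ n = -1 := by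
      rcases Nat.even_or_odd n with h | h
      · exact Or.inl h.neg_one_pow
      · exact Or.inr h.neg_one_pow
    -- generic degree bounds for either assignment of At/Bt
    have main : ∀ C D : Finset (Sym2 V),
        ((C = At ∧ D = Bt) ∨ (C = Bt ∧ D = At)) →
        (∀ v, |(fdeg (A' ∪ C) v : ℤ) - (fdeg (B' ∪ D) v : ℤ)| ≤ 2) ∧
        ((∃ c : V → Bool, ∀ e ∈ S, ∀ a b : V, e = s(a, b) → c a ≠ c b) →
          ∀ v, |(fdeg (A' ∪ C) v : ℤ) - (fdeg (B' ∪ D) v : ℤ)| ≤ 1) := by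
      intro C D hCD
      have hCT : C ⊆ T := by rcases hCD with ⟨rfl, rfl⟩ | ⟨rfl, rfl⟩ <;> assumption
      have hDT : D ⊆ T := by rcases hCD with ⟨rfl, rfl⟩ | ⟨rfl, rfl⟩ <;> assumption
      have hA'C : Disjoint A' C := (hRT.mono hA'R hCT)
      have hB'D : Disjoint B' D := (hRT.mono hB'R hDT)
      have hfC : ∀ v, fdeg (A' ∪ C) v = fdeg A' v + fdeg C v := fdeg_union hA'C
      have hfD : ∀ v, fdeg (B' ∪ D) v = fdeg B' v + fdeg D v := fdeg_union hB'D
      have hdT : ∀ v, (fdeg C v : ℤ) - (fdeg D v : ℤ)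
            = (fdeg At v : ℤ) - fdeg Bt v
          ∨ (fdeg C v : ℤ) - (fdeg D v : ℤ) = -((fdeg At v : ℤ) - fdeg Bt v) := by
        intro v
        rcases hCD with ⟨rfl, rfl⟩ | ⟨rfl, rfl⟩
        · exact Or.inl rfl
        · exact Or.inr (by ring)
      constructor
      · intro v
        by_cases hv : v = x ∨ v = z
        · have h0 : fdeg A' v = 0 :=
            Nat.le_zero.mp (hend v hv ▸ fdeg_mono hA'R v)
          have h0' : fdeg B' v = 0 :=
            Nat.le_zero.mp (hend v hv ▸ fdeg_mono hB'R v)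
          have habs : |(fdeg At v : ℤ) - fdeg Bt v| ≤ 2 := by
            rw [hdiffT v]
            rcases hpow with h | h <;> rw [h] <;> split_ifs <;> norm_num
          rw [abs_le] at habs ⊢
          rcases hdT v with h | h <;>
            · rw [hfC v, hfD v]
              push_cast
              constructor <;> linarith [habs.1, habs.2]
        · push_neg at hv
          have hG : (fdeg At v : ℤ) - fdeg Bt v = 0 := by
            rw [hdiffT v, if_neg hv.1, if_neg hv.2]; ring
          have hB2 := hdeg' v
          rw [abs_le] at hB2 ⊢
          rcases hdT v with h | h <;>
            · rw [hfC v, hfD v]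
              push_cast
              rw [hG] at h
              constructor <;> linarith [hB2.1, hB2.2]
      · rintro ⟨c, hc⟩ v
        have hbipR := hbip' ⟨c, fun e he => hc e (hRS he)⟩ v
        by_cases hv : v = x ∨ v = z
        · have h0 : fdeg A' v = 0 :=
            Nat.le_zero.mp (hend v hv ▸ fdeg_mono hA'R v)
          have h0' : fdeg B' v = 0 :=
            Nat.le_zero.mp (hend v hv ▸ fdeg_mono hB'R v)
          have habs : |(fdeg At v : ℤ) - fdeg Bt v| ≤ 1 := by
            by_cases hxz : x = z
            · -- closed trail: even length
              have hcol : c z = c x := by rw [hxz]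
              have heven : Even n := by
                rw [hn]
                exact (color_parity c x p
                  (fun e he a b hab => hc e (htr.2 e he) a b hab)).mp hcol
              have h1 : ((-1 : ℤ)) ^ n = 1 := heven.neg_one_pow
              rw [hdiffT v, h1, ← hxz]
              split_ifs <;> norm_num
            · have hnb : ¬ (v = x ∧ v = z) := by
                rintro ⟨rfl, h2⟩; exact hxz h2
              rw [hdiffT v]
              by_cases h1 : v = x <;> by_cases h2 : v = z
              · exact absurd ⟨h1, h2⟩ hnb
              · rw [if_pos h1, if_neg h2]; norm_num
              · rw [if_neg h1, if_pos h2]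
                rcases hpow with h | h <;> rw [h] <;> norm_num
              · rw [if_neg h1, if_neg h2]; norm_num
          rw [abs_le] at habs ⊢
          rcases hdT v with h | h <;>
            · rw [hfC v, hfD v]
              push_cast
              constructor <;> linarith [habs.1, habs.2]
        · push_neg at hv
          have hG : (fdeg At v : ℤ) - fdeg Bt v = 0 := by
            rw [hdiffT v, if_neg hv.1, if_neg hv.2]; ring
          rw [abs_le] at hbipR ⊢
          rcases hdT v with h | h <;>
            · rw [hfC v, hfD v]
              push_cast
              rw [hG] at h
              constructor <;> linarith [hbipR.1, hbipR.2]
    by_cases hpar : n % 2 = 1 ∧ R.card % 2 = 1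
    · -- swap: A gets Bt
      have hA'Bt : Disjoint A' Bt := hRT.mono hA'R hBtT
      have hB'At : Disjoint B' At := hRT.mono hB'R hAtT
      obtain ⟨hm2, hm1⟩ := main Bt At (Or.inr ⟨rfl, rfl⟩)
      refine ⟨A' ∪ Bt, B' ∪ At, ?_, ?_, ?_, hm2, hm1⟩
      · rw [val_union hA'Bt, val_union hB'At, hSval, hTval]
        rw [← hsum']
        abel
      · rw [Finset.card_union_of_disjoint hA'Bt, hcardA', hcBt, hScard]
        omega
      · rw [Finset.card_union_of_disjoint hB'At, hcardB', hcAt, hScard]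
        omega
    · have hA'At : Disjoint A' At := hRT.mono hA'R hAtT
      have hB'Bt : Disjoint B' Bt := hRT.mono hB'R hBtT
      obtain ⟨hm2, hm1⟩ := main At Bt (Or.inl ⟨rfl, rfl⟩)
      refine ⟨A' ∪ At, B' ∪ Bt, ?_, ?_, ?_, hm2, hm1⟩
      · rw [val_union hA'At, val_union hB'Bt, hSval, hTval]
        rw [← hsum']
        abel
      · rw [Finset.card_union_of_disjoint hA'At, hcardA', hcAt, hScard]
        omega
      · rw [Finset.card_union_of_disjoint hB'Bt, hcardB', hcBt, hScard]
        omega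

lemma mdeg_add (a b : Multiset (Sym2 V)) (v : V) :
    mdeg (a + b) v = mdeg a v + mdeg b v := by
  simp [mdeg, Multiset.filter_add]

lemma fdeg_eq_mdeg_val (F : Finset (Sym2 V)) (v : V) : fdeg F v = mdeg F.val v := rfl

end Stmt4Aux

open Stmt4Aux

/-- Let `G = (V,E)` be a finite multigraph in which every edge has multiplicity at most two.
Then the edge multiset `E` can be partitioned into two simple edge sets `E₁` and `E₂` such that:
(P1) `|E₁| = ⌈|E|/2⌉` and `|E₂| = ⌊|E|/2⌋`;
(P2) for each `i ∈ {1,2}` and every vertex `v`, `d_G(v)/2 − 1 ≤ d_i(v) ≤ d_G(v)/2 + 1`;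
(P3) if `G` is bipartite then moreover `⌊d_G(v)/2⌋ ≤ d_i(v) ≤ ⌈d_G(v)/2⌉`. -/
theorem stmt_4 (E : Multiset (Sym2 V))
    (hdiag : ∀ e ∈ E, ¬ Sym2.IsDiag e)
    (hmult : ∀ e : Sym2 V, E.count e ≤ 2) :
    ∃ E₁ E₂ : Finset (Sym2 V),
      E₁.val + E₂.val = E ∧
      E₁.card = (Multiset.card E + 1) / 2 ∧
      E₂.card = Multiset.card E / 2 ∧
      (∀ v : V, ∀ F ∈ [E₁, E₂],
        (mdeg E v : ℝ) / 2 - 1 ≤ (fdeg F v : ℝ) ∧ (fdeg F v : ℝ) ≤ (mdeg E v : ℝ) / 2 + 1) ∧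
      (MultigraphBipartite E →
        ∀ v : V, ∀ F ∈ [E₁, E₂],
          mdeg E v / 2 ≤ fdeg F v ∧ fdeg F v ≤ (mdeg E v + 1) / 2) := by
  classical
  set D : Finset (Sym2 V) := E.toFinset.filter (fun e => E.count e = 2) with hD
  set S : Finset (Sym2 V) := E.toFinset.filter (fun e => E.count e = 1) with hS
  have hmemD : ∀ e : Sym2 V, e ∈ D ↔ E.count e = 2 := by
    intro e
    simp only [hD, Finset.mem_filter, Multiset.mem_toFinset]
    constructor
    · rintro ⟨-, h⟩; exact h
    · intro h
      exact ⟨by rw [← Multiset.count_pos, h]; norm_num, h⟩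
  have hmemS : ∀ e : Sym2 V, e ∈ S ↔ E.count e = 1 := by
    intro e
    simp only [hS, Finset.mem_filter, Multiset.mem_toFinset]
    constructor
    · rintro ⟨-, h⟩; exact h
    · intro h
      exact ⟨by rw [← Multiset.count_pos, h]; norm_num, h⟩
  have hcnt : ∀ (F : Finset (Sym2 V)) (e : Sym2 V),
      F.val.count e = if e ∈ F then 1 else 0 := by
    intro F e
    split
    · exact Multiset.count_eq_one_of_mem F.nodup (by assumption)
    · exact Multiset.count_eq_zero_of_notMem (by assumption)
  have hdecomp : D.val + D.val + S.val = E := by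
    refine Multiset.ext.mpr fun e => ?_
    simp only [Multiset.count_add, hcnt]
    have h2 := hmult e
    by_cases hd : e ∈ D <;> by_cases hs : e ∈ S
    · exact absurd ((hmemS e).mp hs) (by rw [(hmemD e).mp hd] at *; omega)
    · have := (hmemD e).mp hd; simp [hd, hs]; omega
    · have := (hmemS e).mp hs; simp [hd, hs]; omega
    · have hd' : ¬ E.count e = 2 := fun h => hd ((hmemD e).mpr h)
      have hs' : ¬ E.count e = 1 := fun h => hs ((hmemS e).mpr h)
      simp [hd, hs]; omega
  have hdiagS : ∀ e ∈ S, ¬ e.IsDiag := by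
    intro e he
    refine hdiag e ?_
    rw [← Multiset.count_pos, (hmemS e).mp he]
    norm_num
  obtain ⟨A, B, hsum, hcA, hcB, hdeg2, hdeg1⟩ :=
    core S.card S le_rfl hdiagS
  have hAS : A ⊆ S := fun e he =>
    Multiset.mem_of_le (hsum ▸ Multiset.le_add_right _ _) he
  have hBS : B ⊆ S := fun e he =>
    Multiset.mem_of_le (hsum ▸ Multiset.le_add_left _ _) he
  have hDS : Disjoint D S := by
    rw [Finset.disjoint_left]
    intro e hd hs
    have h1 := (hmemD e).mp hd
    have h2 := (hmemS e).mp hs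
    omega
  have hDA : Disjoint D A := hDS.mono_right hAS
  have hDB : Disjoint D B := hDS.mono_right hBS
  have hEcard : Multiset.card E = 2 * D.card + S.card := by
    rw [← hdecomp]
    simp only [Multiset.card_add]
    have h1 : Multiset.card D.val = D.card := rfl
    have h2 : Multiset.card S.val = S.card := rfl
    omega
  have hm : ∀ v : V, mdeg E v = 2 * fdeg D v + (fdeg A v + fdeg B v) := by
    intro v
    rw [← hdecomp, mdeg_add, mdeg_add, ← hsum, mdeg_add]
    rw [← fdeg_eq_mdeg_val, ← fdeg_eq_mdeg_val, ← fdeg_eq_mdeg_val]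
    ring
  refine ⟨D ∪ A, D ∪ B, ?_, ?_, ?_, ?_, ?_⟩
  · rw [val_union hDA, val_union hDB, ← hdecomp, ← hsum]
    abel
  · rw [Finset.card_union_of_disjoint hDA, hEcard, hcA]
    omega
  · rw [Finset.card_union_of_disjoint hDB, hEcard, hcB]
    omega
  · intro v F hF
    have hb := hdeg2 v
    rw [abs_le] at hb
    have hb1 : (fdeg A v : ℝ) - fdeg B v ≤ 2 := by exact_mod_cast hb.2
    have hb2 : (-2 : ℝ) ≤ (fdeg A v : ℝ) - fdeg B v := by exact_mod_cast hb.1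
    have hmv : (mdeg E v : ℝ) = 2 * fdeg D v + (fdeg A v + fdeg B v) := by
      exact_mod_cast congrArg (Nat.cast : ℕ → ℝ) (hm v)
    simp only [List.mem_cons, List.mem_singleton, List.not_mem_nil, or_false] at hF
    rcases hF with rfl | rfl
    · rw [fdeg_union hDA v]
      push_cast
      constructor <;> (rw [hmv]; push_cast; linarith)
    · rw [fdeg_union hDB v]
      push_cast
      constructor <;> (rw [hmv]; push_cast; linarith)
  · rintro ⟨c, hc⟩ v F hF
    have hcS : ∀ e ∈ S, ∀ a b : V, e = s(a, b) → c a ≠ c b := by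
      intro e he a b hab
      refine hc e ?_ a b hab
      rw [← Multiset.count_pos, (hmemS e).mp he]
      norm_num
    have hb := hdeg1 ⟨c, hcS⟩ v
    rw [abs_le] at hb
    have hb1 : fdeg A v ≤ fdeg B v + 1 := by exact_mod_cast (by linarith [hb.2] :
      (fdeg A v : ℤ) ≤ fdeg B v + 1)
    have hb2 : fdeg B v ≤ fdeg A v + 1 := by exact_mod_cast (by linarith [hb.1] :
      (fdeg B v : ℤ) ≤ fdeg A v + 1)
    have hmv := hm v
    simp only [List.mem_cons, List.mem_singleton, List.not_mem_nil, or_false] at hF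
    rcases hF with rfl | rfl
    · rw [fdeg_union hDA v, hmv]
      omega
    · rw [fdeg_union hDB v, hmv]
      omega
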